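/- The quasisymmetric monomial glide M̄_α(y_1,...,y_n) = ∑_{σ∈P_α} μ_{P_α}(σ) y^σ has lowest-degree homogeneous component equal to the truncated monomial quasisymmetric function M_{n,α} = ∑_{i_1<⋯<i_k} y_{i_1}^{α_1}⋯y_{i_k}^{α_k}; consequently the family {M̄_α} (over all compositions α of length ≤ n) is linearly independent over ℚ. -/

import Mathlib

open MvPolynomial Finset
open scoped Classical

/-- The positive part of a weak composition: delete the zero entries. -/
def posList (l : List ℕ) : List ℕ := l.filter (fun x => x ≠ 0)

/-- `S_α`: length-`n` tuples of nonnegative integers whose positive part is `α`. -/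
def Sset (α : List ℕ) (n : ℕ) : Set (Fin n → ℕ) :=
  {b | posList (List.ofFn b) = α}

/-- `P_α`: componentwise maxima of nonempty collections of elements of `S_α`. -/
def Pset (α : List ℕ) (n : ℕ) : Set (Fin n → ℕ) :=
  {σ | ∃ T : Finset (Fin n → ℕ), T.Nonempty ∧ (↑T : Set (Fin n → ℕ)) ⊆ Sset α n ∧ σ = T.sup id}

/-- The local moves (M.1): `0p ↦ p0` and (M.2'): `0p ↦ pp` for `p > 0`. -/
inductive GlideMove : List ℕ → List ℕ → Prop
  | m1 (u v : List ℕ) (p : ℕ) (hp : 0 < p) :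
      GlideMove (u ++ 0 :: p :: v) (u ++ p :: 0 :: v)
  | m2 (u v : List ℕ) (p : ℕ) (hp : 0 < p) :
      GlideMove (u ++ 0 :: p :: v) (u ++ p :: p :: v)

/-- `C_α`: strings obtainable from elements of `S_α` by iterated local moves. -/
def Cset (α : List ℕ) (n : ℕ) : Set (Fin n → ℕ) :=
  {σ | ∃ b ∈ Sset α n, Relation.ReflTransGen GlideMove (List.ofFn b) (List.ofFn σ)}

/-- The exponent vector placing `β_t` in position `j_t`. -/
noncomputable def expVec {n k : ℕ} (j : Fin k → Fin n) (β : Fin k → ℕ) : Fin n →₀ ℕ :=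
  Finsupp.equivFunOnFinite.symm (fun i => ∑ t : Fin k, if j t = i then β t else 0)

/-- A polynomial is quasisymmetric if, for every composition `β` and any two strictly
increasing index sequences, the corresponding monomials have equal coefficients. -/
def IsQuasisymmetric {n : ℕ} {R : Type*} [CommSemiring R] (f : MvPolynomial (Fin n) R) : Prop :=
  ∀ (k : ℕ) (β : Fin k → ℕ), (∀ t, 0 < β t) →
    ∀ j j' : Fin k → Fin n, StrictMono j → StrictMono j' →
      f.coeff (expVec j β) = f.coeff (expVec j' β)

/-- The truncated monomial quasisymmetric function
`M_{n,α} = ∑_{i_1 < ⋯ < i_k ≤ n} x_{i_1}^{α_1} ⋯ x_{i_k}^{α_k}`. -/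
noncomputable def Mqs (n : ℕ) (α : List ℕ) : MvPolynomial (Fin n) ℤ :=
  ∑ j ∈ Finset.univ.filter (fun j : Fin α.length → Fin n => StrictMono j),
    ∏ t : Fin α.length, X (j t) ^ α.get t

namespace Aux

variable {n k : ℕ}

def vecOf (j : Fin k → Fin n) (β : Fin k → ℕ) : Fin n → ℕ :=
  fun i => ∑ t : Fin k, if j t = i then β t else 0

lemma vecOf_apply_eq {j : Fin k → Fin n} (hj : Function.Injective j) (β : Fin k → ℕ) (t : Fin k) :
    vecOf j β (j t) = β t := by
  rw [vecOf, Finset.sum_eq_single t]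
  · simp
  · intro s _ hst
    exact if_neg fun h => hst (hj h)
  · simp

lemma vecOf_apply_ne {j : Fin k → Fin n} {i : Fin n} (h : ∀ t, j t ≠ i) (β : Fin k → ℕ) :
    vecOf j β i = 0 :=
  Finset.sum_eq_zero fun t _ => if_neg (h t)

lemma posList_sum (l : List ℕ) : (posList l).sum = l.sum := by
  induction l with
  | nil => rfl
  | cons a l ih =>
    by_cases h : a = 0 <;> simp [posList, List.filter_cons, h] at * <;> omega

lemma posList_pos {l : List ℕ} {x : ℕ} (hx : x ∈ posList l) : x ≠ 0 := by
  simpa using (List.of_mem_filter hx)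

lemma mem_S_sum {α : List ℕ} {b : Fin n → ℕ} (hb : b ∈ Sset α n) : ∑ i, b i = α.sum := by
  have : (List.ofFn b).sum = ∑ i, b i := List.sum_ofFn
  rw [← this, ← hb, posList_sum]

lemma S_subset_P {α : List ℕ} : Sset α n ⊆ Pset α n := by
  intro b hb
  exact ⟨{b}, Finset.singleton_nonempty b, by simpa using hb, by simp⟩

lemma eq_of_le_of_sum_le {b σ : Fin n → ℕ} (h : b ≤ σ) (hs : ∑ i, σ i ≤ ∑ i, b i) : b = σ := by
  funext i
  exact (Finset.sum_eq_sum_iff_of_le fun i _ => h i).mp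
    (le_antisymm (Finset.sum_le_sum fun i _ => h i) hs) i (Finset.mem_univ i)

lemma P_sum_ge {α : List ℕ} {σ : Fin n → ℕ} (hσ : σ ∈ Pset α n) :
    α.sum ≤ ∑ i, σ i ∧ (∑ i, σ i ≤ α.sum → σ ∈ Sset α n) := by
  obtain ⟨T, ⟨b, hbT⟩, hTS, rfl⟩ := hσ
  have hb : b ∈ Sset α n := hTS hbT
  have hle : b ≤ T.sup id := Finset.le_sup (f := id) hbT
  have hsum : ∑ i, b i = α.sum := mem_S_sum hb
  constructor
  · rw [← hsum]; exact Finset.sum_le_sum fun i _ => hle i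
  · intro h
    have hbs : b = T.sup id := eq_of_le_of_sum_le hle (hsum ▸ h)
    rw [← hbs]; exact hb



lemma strictMono_consCases {m N : ℕ} {j : Fin m → Fin N} (hj : StrictMono j) :
    StrictMono (Fin.cases 0 (fun t => (j t).succ) : Fin (m + 1) → Fin (N + 1)) := by
  intro x y hxy
  induction y using Fin.cases with
  | zero => exact absurd hxy (Fin.not_lt_zero x)
  | succ y' =>
    induction x using Fin.cases with
    | zero => simpa using Fin.succ_pos (j y')
    | succ x' =>
      simpa using Fin.succ_lt_succ_iff.mpr (hj (Fin.succ_lt_succ_iff.mp hxy))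

lemma exists_index_list : ∀ l : List ℕ,
    ∃ j : Fin (posList l).length → Fin l.length, StrictMono j ∧
      (∀ t, l.get (j t) = (posList l).get t) ∧
      (∀ i : Fin l.length, (∀ t, j t ≠ i) → l.get i = 0) := by
  intro l
  induction l with
  | nil =>
    exact ⟨fun t => Fin.elim0 t, fun a => a.elim0, fun t => t.elim0, fun i => i.elim0⟩
  | cons a l ih =>
    obtain ⟨j, hmono, hget, hzero⟩ := ih
    by_cases ha : a = 0
    · subst ha
      have hpl : posList (0 :: l) = posList l := by simp [posList, List.filter_cons]
      have hlen : (posList (0 :: l)).length = (posList l).length := by rw [hpl]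
      refine ⟨fun t => Fin.succ (j (Fin.cast hlen t)), ?_, ?_, ?_⟩
      · intro x y hxy
        exact Fin.succ_lt_succ_iff.mpr (hmono (show Fin.cast hlen x < Fin.cast hlen y from hxy))
      · intro t
        have h1 : (0 :: l).get (Fin.succ (j (Fin.cast hlen t))) = l.get (j (Fin.cast hlen t)) := rfl
        rw [h1, hget, List.get_of_eq hpl]
        rfl
      · intro i hi
        induction i using Fin.cases with
        | zero => rfl
        | succ i' =>
          refine hzero i' fun t => ?_
          intro h
          exact hi (Fin.cast hlen.symm t) (show (j t).succ = i'.succ by rw [h])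
    · have hpl : posList (a :: l) = a :: posList l := by simp [posList, List.filter_cons, ha]
      have hlen : (posList (a :: l)).length = (posList l).length + 1 := by rw [hpl]; rfl
      refine ⟨fun t => (Fin.cases 0 (fun s => (j s).succ) (Fin.cast hlen t) : Fin (l.length + 1)), ?_, ?_, ?_⟩
      · intro x y hxy
        exact strictMono_consCases hmono (show Fin.cast hlen x < Fin.cast hlen y from hxy)
      · intro t
        have key : ∀ s : Fin ((posList l).length + 1),
            (a :: l).get ((Fin.cases 0 (fun s => (j s).succ) s : Fin (l.length + 1))) = (a :: posList l).get s := by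
          intro s
          induction s using Fin.cases with
          | zero => rfl
          | succ s' => simpa using hget s'
        rw [key (Fin.cast hlen t), List.get_of_eq hpl]
        rfl
      · intro i hi
        induction i using Fin.cases with
        | zero =>
          exact absurd (by rfl) (hi (Fin.cast hlen.symm 0))
        | succ i' =>
          refine hzero i' fun t h => ?_
          exact hi (Fin.cast hlen.symm t.succ) (by simp [h])

lemma exists_index {n : ℕ} (b : Fin n → ℕ) :
    ∃ j : Fin (posList (List.ofFn b)).length → Fin n, StrictMono j ∧
      (∀ t, b (j t) = (posList (List.ofFn b)).get t) ∧
      (∀ i, (∀ t, j t ≠ i) → b i = 0) := by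
  obtain ⟨j, h1, h2, h3⟩ := exists_index_list (List.ofFn b)
  have hn : (List.ofFn b).length = n := List.length_ofFn
  refine ⟨fun t => Fin.cast hn (j t), ?_, ?_, ?_⟩
  · intro x y hxy
    exact (show (j x : ℕ) < j y from h1 hxy)
  · intro t
    have := h2 t
    rwa [List.get_ofFn] at this
  · intro i hi
    have := h3 (Fin.cast hn.symm i) fun t h => hi t (show Fin.cast hn (j t) = i by rw [h]; exact Fin.ext rfl)
    rwa [List.get_ofFn] at this

lemma strictMono_range_inj {j j' : Fin k → Fin n} (hj : StrictMono j) (hj' : StrictMono j')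
    (h : Set.range j = Set.range j') : j = j' := by
  haveI : WellFoundedLT (Fin k) := Finite.to_wellFoundedLT
  exact (hj.range_inj hj').mp h

lemma vecOf_inj {β : Fin k → ℕ} (hβ : ∀ t, 0 < β t)
    {j j' : Fin k → Fin n} (hj : StrictMono j) (hj' : StrictMono j')
    (h : vecOf j β = vecOf j' β) : j = j' := by
  have key : ∀ (j₁ j₂ : Fin k → Fin n), StrictMono j₁ → StrictMono j₂ →
      vecOf j₁ β = vecOf j₂ β → Set.range j₁ ⊆ Set.range j₂ := by
    rintro j₁ j₂ h₁ h₂ hv i ⟨t, rfl⟩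
    by_contra hmem
    have h0 : vecOf j₂ β (j₁ t) = 0 :=
      vecOf_apply_ne (fun s hs => hmem ⟨s, hs⟩) β
    rw [← hv, vecOf_apply_eq h₁.injective] at h0
    exact (hβ t).ne' h0
  exact strictMono_range_inj hj hj'
    (Set.Subset.antisymm (key j j' hj hj' h) (key j' j hj' hj h.symm))

lemma vecOf_mem_S {α : List ℕ} (hα : ∀ a ∈ α, 0 < a) {j : Fin α.length → Fin n}
    (hj : StrictMono j) : vecOf j α.get ∈ Sset α n := by
  obtain ⟨j₀, h1, h2, h3⟩ := exists_index (vecOf j α.get)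
  have hβpos : ∀ t, 0 < α.get t := fun t => hα _ (α.get_mem t)
  have hrange : Set.range j₀ = Set.range j := by
    ext i
    constructor
    · rintro ⟨t, rfl⟩
      have hne : vecOf j α.get (j₀ t) ≠ 0 := by
        rw [h2]
        exact posList_pos (List.get_mem _ t)
      by_contra hmem
      exact hne (vecOf_apply_ne (fun s hs => hmem ⟨s, hs⟩) α.get)
    · rintro ⟨t, rfl⟩
      by_contra hmem
      have h0 : vecOf j α.get (j t) = 0 := h3 _ (fun s hs => hmem ⟨s, hs⟩)
      rw [vecOf_apply_eq hj.injective] at h0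
      exact (hβpos t).ne' h0
  have hcard : (posList (List.ofFn (vecOf j α.get))).length = α.length := by
    have e1 : (Finset.image j₀ Finset.univ).card = (posList (List.ofFn (vecOf j α.get))).length := by
      rw [Finset.card_image_of_injective _ h1.injective, Finset.card_univ, Fintype.card_fin]
    have e2 : (Finset.image j Finset.univ).card = α.length := by
      rw [Finset.card_image_of_injective _ hj.injective, Finset.card_univ, Fintype.card_fin]
    have himg : Finset.image j₀ Finset.univ = Finset.image j Finset.univ := by
      apply Finset.coe_injective
      simp only [Finset.coe_image, Finset.coe_univ, Set.image_univ]
      exact hrange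
    rw [← e1, himg, e2]
  have hjc : StrictMono (j ∘ Fin.cast hcard) := fun x y hxy => hj hxy
  have hjj : j₀ = j ∘ Fin.cast hcard := by
    refine strictMono_range_inj h1 hjc ?_
    rw [hrange]
    ext i
    constructor
    · rintro ⟨t, rfl⟩; exact ⟨Fin.cast hcard.symm t, rfl⟩
    · rintro ⟨t, rfl⟩; exact ⟨Fin.cast hcard t, rfl⟩
  show posList (List.ofFn (vecOf j α.get)) = α
  apply List.ext_get hcard
  intro t ht ht'
  have key := h2 ⟨t, ht⟩
  rw [hjj] at key
  simp only [Function.comp_apply] at key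
  rw [← key, vecOf_apply_eq hj.injective]
  rfl

lemma mem_S_eq_vecOf {α : List ℕ} {σ : Fin n → ℕ} (hσ : σ ∈ Sset α n) :
    ∃ j : Fin α.length → Fin n, StrictMono j ∧ σ = vecOf j α.get := by
  obtain ⟨j₀, h1, h2, h3⟩ := exists_index σ
  have hpl : posList (List.ofFn σ) = α := hσ
  have hlen : α.length = (posList (List.ofFn σ)).length := by rw [hpl]
  have hsm : StrictMono (fun t => j₀ (Fin.cast hlen t)) := fun x y hxy => h1 hxy
  refine ⟨fun t => j₀ (Fin.cast hlen t), hsm, ?_⟩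
  funext i
  by_cases hi : ∃ t, j₀ (Fin.cast hlen t) = i
  · obtain ⟨t, rfl⟩ := hi
    rw [show (vecOf (fun t => j₀ (Fin.cast hlen t)) α.get) (j₀ (Fin.cast hlen t))
        = α.get t from vecOf_apply_eq hsm.injective α.get t]
    rw [h2, List.get_of_eq hpl]
    rfl
  · push_neg at hi
    rw [vecOf_apply_ne hi]
    exact h3 i fun t => hi (Fin.cast hlen.symm t)

lemma prod_X_pow_eq {R : Type*} [CommSemiring R] (σ : Fin n → ℕ) :
    (∏ i : Fin n, (MvPolynomial.X i : MvPolynomial (Fin n) R) ^ σ i)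
      = MvPolynomial.monomial (Finsupp.equivFunOnFinite.symm σ) 1 := by
  rw [← MvPolynomial.prod_X_pow_eq_monomial]
  refine (Finset.prod_subset (Finset.subset_univ _) ?_).symm
  intro x _ hx
  have h0 : σ x = 0 := Finsupp.notMem_support_iff.mp hx
  rw [h0, pow_zero]

lemma degree_symm (σ : Fin n → ℕ) : (Finsupp.equivFunOnFinite.symm σ).degree = ∑ i, σ i := by
  show ∑ i ∈ (Finsupp.equivFunOnFinite.symm σ).support, (Finsupp.equivFunOnFinite.symm σ) i
      = ∑ i, σ i
  refine Finset.sum_subset (Finset.subset_univ _) ?_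
  intro x _ hx
  exact Finsupp.notMem_support_iff.mp hx


lemma hc_monomial {R : Type*} [CommSemiring R] (d : ℕ) (u : Fin n →₀ ℕ) (c : R) :
    MvPolynomial.homogeneousComponent d (MvPolynomial.monomial u c)
      = if d = u.degree then MvPolynomial.monomial u c else 0 :=
  MvPolynomial.homogeneousComponent_of_mem
    ((MvPolynomial.mem_homogeneousSubmodule _ _).mpr (MvPolynomial.isHomogeneous_monomial c rfl))

lemma prod_X_pow_vecOf {R : Type*} [CommSemiring R] (j : Fin k → Fin n) (β : Fin k → ℕ) :
    (∏ i : Fin n, (MvPolynomial.X i : MvPolynomial (Fin n) R) ^ vecOf j β i)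
      = ∏ t : Fin k, MvPolynomial.X (j t) ^ β t := by
  unfold vecOf
  simp only [← Finset.prod_pow_eq_pow_sum]
  rw [Finset.prod_comm]
  refine Finset.prod_congr rfl fun t _ => ?_
  rw [Finset.prod_eq_single (j t)]
  · rw [if_pos rfl]
  · intro i _ hne
    rw [if_neg fun h => hne h.symm, pow_zero]
  · intro h
    exact absurd (Finset.mem_univ _) h

end Aux

/-- The quasisymmetric monomial glide `M̄_α = ∑_{σ∈P_α} μ_{P_α}(σ) y^σ` has lowest-degree
homogeneous component equal to the truncated monomial quasisymmetric function `M_{n,α}`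
(its homogeneous component in degree `|α|` is `M_{n,α}` and all lower components vanish);
consequently, the family `{M̄_α}` over compositions of length at most `n` is linearly
independent over ℚ. -/


theorem stmt_17 (n : ℕ)
    (F : List ℕ → Finset (Fin n → ℕ))
    (hF : ∀ α : List ℕ, (∀ a ∈ α, 0 < a) → α.length ≤ n →
      (↑(F α) : Set (Fin n → ℕ)) = Pset α n)
    (μ : List ℕ → (Fin n → ℕ) → ℤ)
    (hμ : ∀ α : List ℕ, (∀ a ∈ α, 0 < a) → α.length ≤ n →
      ∀ p ∈ F α, ∑ q ∈ (F α).filter (fun q => q ≤ p), μ α q = 1) :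
    (∀ α : List ℕ, (∀ a ∈ α, 0 < a) → α.length ≤ n →
      (MvPolynomial.homogeneousComponent α.sum
          (∑ σ ∈ F α, μ α σ • ∏ i : Fin n, (X i : MvPolynomial (Fin n) ℤ) ^ σ i)
        = Mqs n α ∧
       ∀ d : ℕ, d < α.sum →
        MvPolynomial.homogeneousComponent d
          (∑ σ ∈ F α, μ α σ • ∏ i : Fin n, (X i : MvPolynomial (Fin n) ℤ) ^ σ i) = 0)) ∧
    LinearIndependent ℚ
      (fun α : {α : List ℕ // (∀ a ∈ α, 0 < a) ∧ α.length ≤ n} =>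
        ∑ σ ∈ F α.1, (μ α.1 σ : ℚ) • ∏ i : Fin n, (X i : MvPolynomial (Fin n) ℚ) ^ σ i) := by
  classical
  have hμ1 : ∀ α : List ℕ, (∀ a ∈ α, 0 < a) → α.length ≤ n →
      ∀ b ∈ Sset α n, μ α b = 1 := by
    intro α hα hlen b hbS
    have hbF : b ∈ F α := by
      rw [← Finset.mem_coe, hF α hα hlen]
      exact Aux.S_subset_P hbS
    have hfilter : (F α).filter (fun q => q ≤ b) = {b} := by
      ext q
      simp only [Finset.mem_filter, Finset.mem_singleton]
      constructor
      · rintro ⟨hqF, hqb⟩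
        have hqP : q ∈ Pset α n := by
          rw [← hF α hα hlen]; exact Finset.mem_coe.mpr hqF
        have h1 := (Aux.P_sum_ge hqP).1
        have h2 : ∑ i, b i = α.sum := Aux.mem_S_sum hbS
        exact Aux.eq_of_le_of_sum_le hqb (by omega)
      · rintro rfl
        exact ⟨hbF, le_refl _⟩
    have hone := hμ α hα hlen b hbF
    rw [hfilter, Finset.sum_singleton] at hone
    exact hone
  constructor
  · intro α hα hlen
    have hPsum : ∀ σ ∈ F α, α.sum ≤ ∑ i, σ i ∧ (∑ i, σ i ≤ α.sum → σ ∈ Sset α n) :=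
      fun σ hσ => Aux.P_sum_ge ((hF α hα hlen) ▸ Finset.mem_coe.mpr hσ)
    have hcomp : ∀ d : ℕ,
        MvPolynomial.homogeneousComponent d
            (∑ σ ∈ F α, μ α σ • ∏ i : Fin n, (X i : MvPolynomial (Fin n) ℤ) ^ σ i)
          = ∑ σ ∈ F α, μ α σ •
              (if d = ∑ i, σ i then monomial (Finsupp.equivFunOnFinite.symm σ) (1:ℤ) else 0) := by
      intro d
      rw [map_sum]
      refine Finset.sum_congr rfl fun σ _ => ?_
      rw [Aux.prod_X_pow_eq, map_smul, Aux.hc_monomial, Aux.degree_symm]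
    constructor
    · rw [hcomp]
      have hfilt : ∑ σ ∈ F α, μ α σ •
            (if α.sum = ∑ i, σ i then monomial (Finsupp.equivFunOnFinite.symm σ) (1:ℤ) else 0)
          = ∑ σ ∈ (F α).filter (fun σ => α.sum = ∑ i, σ i),
              monomial (Finsupp.equivFunOnFinite.symm σ) (1:ℤ) := by
        rw [Finset.sum_filter]
        refine Finset.sum_congr rfl fun σ hσ => ?_
        by_cases hd : α.sum = ∑ i, σ i
        · rw [if_pos hd, hμ1 α hα hlen σ ((hPsum σ hσ).2 hd.ge), one_smul]
        · rw [if_neg hd, smul_zero]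
      rw [hfilt, Mqs]
      have hM : ∀ j : Fin α.length → Fin n,
          (∏ t, (X (j t) : MvPolynomial (Fin n) ℤ) ^ α.get t)
            = monomial (Finsupp.equivFunOnFinite.symm (Aux.vecOf j α.get)) (1:ℤ) := by
        intro j
        rw [← Aux.prod_X_pow_eq, Aux.prod_X_pow_vecOf]
      rw [Finset.sum_congr rfl fun j _ => hM j]
      refine (Finset.sum_bij (fun j _ => Aux.vecOf j α.get) ?_ ?_ ?_ ?_).symm
      · intro j hj
        have hjs : StrictMono j := (Finset.mem_filter.mp hj).2
        have hS : Aux.vecOf j α.get ∈ Sset α n := Aux.vecOf_mem_S hα hjs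
        refine Finset.mem_filter.mpr ⟨?_, (Aux.mem_S_sum hS).symm⟩
        rw [← Finset.mem_coe, hF α hα hlen]
        exact Aux.S_subset_P hS
      · intro j₁ h₁ j₂ h₂ he
        exact Aux.vecOf_inj (fun t => hα _ (α.get_mem t))
          (Finset.mem_filter.mp h₁).2 (Finset.mem_filter.mp h₂).2 he
      · intro σ hσ
        have hm := Finset.mem_filter.mp hσ
        obtain ⟨j, hjs, hσv⟩ := Aux.mem_S_eq_vecOf ((hPsum σ hm.1).2 hm.2.ge)
        exact ⟨j, Finset.mem_filter.mpr ⟨Finset.mem_univ _, hjs⟩, hσv.symm⟩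
      · intro j _
        rfl
    · intro d hd
      rw [hcomp]
      refine Finset.sum_eq_zero fun σ hσ => ?_
      have hne : ¬ (d = ∑ i, σ i) := by
        have := (hPsum σ hσ).1
        omega
      rw [if_neg hne, smul_zero]
  · rw [linearIndependent_iff']
    intro s g hsum i₀ hi₀
    by_contra hgi
    set t := s.filter (fun α => g α ≠ 0) with ht
    have hit : i₀ ∈ t := Finset.mem_filter.mpr ⟨hi₀, hgi⟩
    obtain ⟨α₀, hα₀t, hmin⟩ := Finset.exists_min_image t (fun α => α.1.sum) ⟨i₀, hit⟩
    have hα₀s : α₀ ∈ s := (Finset.mem_filter.mp hα₀t).1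
    have hg₀ : g α₀ ≠ 0 := (Finset.mem_filter.mp hα₀t).2
    have hj₀ : StrictMono (Fin.castLE α₀.2.2 : Fin α₀.1.length → Fin n) :=
      Fin.strictMono_castLE _
    set b₀ : Fin n → ℕ := Aux.vecOf (Fin.castLE α₀.2.2) α₀.1.get with hb₀
    have hb₀S : b₀ ∈ Sset α₀.1 n := Aux.vecOf_mem_S α₀.2.1 hj₀
    set u₀ : Fin n →₀ ℕ := Finsupp.equivFunOnFinite.symm b₀ with hu₀
    have hcoeff : ∀ α : List ℕ,
        (∑ σ ∈ F α, (μ α σ : ℚ) *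
            MvPolynomial.coeff u₀ (∏ i : Fin n, (X i : MvPolynomial (Fin n) ℚ) ^ σ i))
          = if b₀ ∈ F α then (μ α b₀ : ℚ) else 0 := by
      intro α
      have hterm : ∀ σ ∈ F α, (μ α σ : ℚ) *
            MvPolynomial.coeff u₀ (∏ i : Fin n, (X i : MvPolynomial (Fin n) ℚ) ^ σ i)
          = if σ = b₀ then (μ α σ : ℚ) else 0 := by
        intro σ _
        rw [Aux.prod_X_pow_eq, MvPolynomial.coeff_monomial]
        by_cases h : σ = b₀
        · subst h
          rw [if_pos hu₀.symm, if_pos rfl, mul_one]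
        · have hne : ¬ (Finsupp.equivFunOnFinite.symm σ = u₀) := by
            rw [hu₀]
            exact fun he => h (Finsupp.equivFunOnFinite.symm.injective he)
          rw [if_neg hne, if_neg h, mul_zero]
      rw [Finset.sum_congr rfl hterm, Finset.sum_ite_eq' (F α) b₀ (fun σ => (μ α σ : ℚ))]
    have hterm2 : ∀ α ∈ s, g α * (if b₀ ∈ F α.1 then (μ α.1 b₀ : ℚ) else 0)
        = if α = α₀ then g α₀ else 0 := by
      intro α hαs
      by_cases hg : g α = 0
      · have hne : α ≠ α₀ := fun he => hg₀ (he ▸ hg)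
        rw [hg, zero_mul, if_neg hne]
      · have hαt : α ∈ t := Finset.mem_filter.mpr ⟨hαs, hg⟩
        by_cases hb : b₀ ∈ F α.1
        · have hbP : b₀ ∈ Pset α.1 n := by
            rw [← hF α.1 α.2.1 α.2.2]; exact Finset.mem_coe.mpr hb
          have h1 := (Aux.P_sum_ge hbP).1
          have h2 : ∑ i, b₀ i = α₀.1.sum := Aux.mem_S_sum hb₀S
          have h3 : α₀.1.sum ≤ α.1.sum := hmin α hαt
          have hbSα : b₀ ∈ Sset α.1 n := (Aux.P_sum_ge hbP).2 (by omega)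
          have heq : α = α₀ := Subtype.ext
            ((show posList (List.ofFn b₀) = α.1 from hbSα).symm.trans
              (show posList (List.ofFn b₀) = α₀.1 from hb₀S))
          subst heq
          rw [if_pos rfl, if_pos hb, hμ1 α.1 α.2.1 α.2.2 b₀ hbSα]
          norm_num
        · have hne : α ≠ α₀ := by
            intro he
            apply hb
            rw [← Finset.mem_coe, hF α.1 α.2.1 α.2.2]
            apply Aux.S_subset_P
            rw [he]
            exact hb₀S
          rw [if_neg hb, mul_zero, if_neg hne]
    have h0 := congrArg (MvPolynomial.coeff u₀) hsum
    simp only [MvPolynomial.coeff_sum, MvPolynomial.coeff_smul, MvPolynomial.coeff_zero,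
      smul_eq_mul] at h0
    have h2 : ∑ α ∈ s, g α * (if b₀ ∈ F α.1 then (μ α.1 b₀ : ℚ) else 0) = 0 :=
      (Finset.sum_congr rfl (fun α _ => by rw [hcoeff α.1])).trans h0
    have h3 : ∑ α ∈ s, (if α = α₀ then g α₀ else 0) = 0 :=
      (Finset.sum_congr rfl hterm2).symm.trans h2
    rw [Finset.sum_ite_eq' s α₀ (fun _ => g α₀), if_pos hα₀s] at h3
    exact hg₀ h3
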